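/- arXiv:1207.5548 — 2 statements merged into one kernel-verified Lean document; each statement's English description precedes it below -/
import Mathlib

section
/- Fix integers n, j, m ≥ 1 with j ≤ n, a composition (n_1,…,n_j) of n into j positive parts, a real α < 1, and real weights V(n,k) with V(n,j) ≠ 0 and V(n+m, j+k) ≠ 0 for all k ∈ {1,…,m}. Let 1 ≤ l ≤ m. Then the Bayesian nonparametric estimator of the probability of observing at step n+m+1 a species represented l times among the new species satisfies: ∑ (V(n+m+1,j+k)/V(n+m,j+k))·(l−α)·#{i ∈ {1,…,k} : s_i = l}·P(s_1,…,s_k; k) = (l−α)·binom(m,l)·(1−α)_{l−1}·∑_{k=1}^{m−l+1} (V(n+m+1,j+k)/V(n,j))·S(m−l, k−1; α, −(n−jα)), where the left sum ranges over all k ∈ {1,…,m} and all tuples (s_1,…,s_k) of positive integers with ∑_{i=1}^{k} s_i ≤ m. -/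
/-- Rising factorial `(x)_n = x(x+1)⋯(x+n−1)`. -/
noncomputable def risingFac (x : ℝ) (n : ℕ) : ℝ := ∏ i ∈ Finset.range n, (x + i)

/-- Rising factorial with increment `α`: `(x)_{n↑α} = ∏_{i<n} (x + iα)`. -/
noncomputable def risingFacInc (x α : ℝ) (n : ℕ) : ℝ := ∏ i ∈ Finset.range n, (x + i * α)

/-- Falling factorial `(x)_{[n]} = x(x−1)⋯(x−n+1)`. -/
noncomputable def fallingFac (x : ℝ) (n : ℕ) : ℝ := ∏ i ∈ Finset.range n, (x - i)

/-- Compositions of `n` into `k` positive parts, as functions `Fin k → ℕ`. -/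
def compositions (n k : ℕ) : Finset (Fin k → ℕ) :=
  (Fintype.piFinset fun _ => Finset.range (n + 1)).filter
    (fun f => (∀ i, 0 < f i) ∧ ∑ i, f i = n)

/-- Tuples of `k` nonnegative integers summing to `n`. -/
def weakCompositions (n k : ℕ) : Finset (Fin k → ℕ) :=
  (Fintype.piFinset fun _ => Finset.range (n + 1)).filter (fun f => ∑ i, f i = n)

/-- Generalized (central) Stirling number
`S(n,k;α) = (n!/k!) ∑_{(n_1,…,n_k)} ∏_j (1−α)_{n_j−1}/n_j!`,
the sum over compositions of `n` into `k` positive parts. -/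
noncomputable def genStirling (α : ℝ) (n k : ℕ) : ℝ :=
  (Nat.factorial n : ℝ) / (Nat.factorial k : ℝ) *
    ∑ f ∈ compositions n k, ∏ j, risingFac (1 - α) (f j - 1) / (Nat.factorial (f j) : ℝ)

/-- Non-central generalized Stirling number
`S(n,k;α,γ) = ∑_{s=k}^n C(n,s) S(s,k;α) (−γ)_{n−s}`. -/
noncomputable def genStirlingNC (α γ : ℝ) (n k : ℕ) : ℝ :=
  ∑ s ∈ Finset.Icc k n, (n.choose s : ℝ) * genStirling α s k * risingFac (-γ) (n - s)

/-- The conditional multivariate Gibbs distribution weight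
`P(s_1,…,s_k;k) = m!/(s_1!⋯s_k!·k!·(m−s)!)·(V(n+m,j+k)/V(n,j))·(n−jα)_{m−s}·
∏_i (1−α)_{s_i−1}`, where `s = ∑ s_i`. -/
noncomputable def condMulti (α : ℝ) (V : ℕ → ℕ → ℝ) (n j m : ℕ) (k : ℕ)
    (sv : Fin k → ℕ) : ℝ :=
  (Nat.factorial m : ℝ) /
      ((∏ i, (Nat.factorial (sv i) : ℝ)) * (Nat.factorial k : ℝ) *
        (Nat.factorial (m - ∑ i, sv i) : ℝ)) *
    (V (n + m) (j + k) / V n j) * risingFac ((n : ℝ) - j * α) (m - ∑ i, sv i) *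
    ∏ i, risingFac (1 - α) (sv i - 1)

noncomputable def Pw (α x : ℝ) (m : ℕ) {k : ℕ} (sv : Fin k → ℕ) : ℝ :=
  (Nat.factorial m : ℝ) /
      ((∏ i, (Nat.factorial (sv i) : ℝ)) * (Nat.factorial k : ℝ) *
        (Nat.factorial (m - ∑ i, sv i) : ℝ)) *
    risingFac x (m - ∑ i, sv i) * ∏ i, risingFac (1 - α) (sv i - 1)

open Finset

lemma Pw_comp (α x : ℝ) (m k : ℕ) (sv : Fin k → ℕ) (σ : Equiv.Perm (Fin k)) :
    Pw α x m (sv ∘ σ) = Pw α x m sv := by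
  unfold Pw
  simp only [Function.comp_apply]
  rw [Equiv.sum_comp σ sv, Equiv.prod_comp σ (fun i => ((sv i).factorial : ℝ)),
    Equiv.prod_comp σ (fun i => risingFac (1 - α) (sv i - 1))]

lemma mem_comp (m k : ℕ) (sv : Fin k → ℕ) (σ : Equiv.Perm (Fin k)) :
    (sv ∘ σ) ∈ (Fintype.piFinset fun _ : Fin k => Finset.Icc 1 m).filter
      (fun sv => ∑ i, sv i ≤ m) ↔
    sv ∈ (Fintype.piFinset fun _ : Fin k => Finset.Icc 1 m).filter
      (fun sv => ∑ i, sv i ≤ m) := by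
  simp only [mem_filter, Fintype.mem_piFinset, Function.comp_apply]
  rw [Equiv.sum_comp σ sv]
  constructor
  · rintro ⟨h1, h2⟩
    exact ⟨fun i => by simpa using h1 (σ.symm i), h2⟩
  · rintro ⟨h1, h2⟩
    exact ⟨fun i => h1 _, h2⟩

lemma step1 (m l k' : ℕ) (α x : ℝ) :
    ∑ sv ∈ (Fintype.piFinset fun _ : Fin (k'+1) => Finset.Icc 1 m).filter
        (fun sv => ∑ i, sv i ≤ m),
      (((Finset.univ.filter fun i => sv i = l).card : ℕ) : ℝ) * Pw α x m sv =
    ((k' : ℝ) + 1) * ∑ sv ∈ (Fintype.piFinset fun _ : Fin (k'+1) => Finset.Icc 1 m).filter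
        (fun sv => ∑ i, sv i ≤ m),
      (if sv (Fin.last k') = l then Pw α x m sv else 0) := by
  have hcard : ∀ sv : Fin (k'+1) → ℕ,
      (((Finset.univ.filter fun i => sv i = l).card : ℕ) : ℝ) =
        ∑ i : Fin (k'+1), (if sv i = l then (1:ℝ) else 0) := by
    intro sv
    rw [Finset.card_filter]
    push_cast [apply_ite (Nat.cast : ℕ → ℝ)]
    rfl
  calc ∑ sv ∈ (Fintype.piFinset fun _ : Fin (k'+1) => Finset.Icc 1 m).filter
        (fun sv => ∑ i, sv i ≤ m),
      (((Finset.univ.filter fun i => sv i = l).card : ℕ) : ℝ) * Pw α x m sv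
      = ∑ sv ∈ (Fintype.piFinset fun _ : Fin (k'+1) => Finset.Icc 1 m).filter
        (fun sv => ∑ i, sv i ≤ m), ∑ i : Fin (k'+1),
          (if sv i = l then Pw α x m sv else 0) := by
        refine Finset.sum_congr rfl fun sv _ => ?_
        rw [hcard, Finset.sum_mul]
        refine Finset.sum_congr rfl fun i _ => ?_
        split <;> simp
    _ = ∑ i : Fin (k'+1), ∑ sv ∈ (Fintype.piFinset fun _ : Fin (k'+1) => Finset.Icc 1 m).filter
        (fun sv => ∑ i, sv i ≤ m),
          (if sv i = l then Pw α x m sv else 0) := Finset.sum_comm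
    _ = ∑ i : Fin (k'+1), ∑ sv ∈ (Fintype.piFinset fun _ : Fin (k'+1) => Finset.Icc 1 m).filter
        (fun sv => ∑ i, sv i ≤ m),
          (if sv (Fin.last k') = l then Pw α x m sv else 0) := by
        refine Finset.sum_congr rfl fun i _ => ?_
        refine Finset.sum_nbij' (fun sv => sv ∘ (Equiv.swap i (Fin.last k')))
          (fun sv => sv ∘ (Equiv.swap i (Fin.last k'))) ?_ ?_ ?_ ?_ ?_
        · intro sv hsv; exact (mem_comp m (k'+1) sv _).2 hsv
        · intro sv hsv; exact (mem_comp m (k'+1) sv _).2 hsv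
        · intro sv _; funext z; simp [Function.comp]
        · intro sv _; funext z; simp [Function.comp]
        · intro sv _
          rw [Pw_comp]
          simp [Function.comp, Equiv.swap_apply_right]
    _ = ((k' : ℝ) + 1) * _ := by
        rw [Finset.sum_const, Finset.card_univ, Fintype.card_fin, nsmul_eq_mul]
        push_cast; ring

lemma snoc_sum (l k' : ℕ) (t : Fin k' → ℕ) :
    ∑ i, (Fin.snoc t l : Fin (k'+1) → ℕ) i = ∑ i, t i + l := by
  rw [Fin.sum_univ_castSucc]
  simp

lemma step2 (m l k' : ℕ) (hl : 1 ≤ l) (hlm : l ≤ m) (α x : ℝ) :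
    ∑ sv ∈ (Fintype.piFinset fun _ : Fin (k'+1) => Finset.Icc 1 m).filter
        (fun sv => ∑ i, sv i ≤ m),
      (if sv (Fin.last k') = l then Pw α x m sv else 0) =
    ∑ t ∈ (Fintype.piFinset fun _ : Fin k' => Finset.Icc 1 m).filter
        (fun t => ∑ i, t i ≤ m - l),
      Pw α x m (Fin.snoc t l : Fin (k'+1) → ℕ) := by
  rw [← Finset.sum_filter, Finset.filter_filter]
  refine Finset.sum_nbij' (fun sv => Fin.init sv) (fun t => Fin.snoc t l) ?_ ?_ ?_ ?_ ?_
  · intro sv hsv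
    simp only [mem_filter, Fintype.mem_piFinset] at hsv ⊢
    obtain ⟨h1, h2, h3⟩ := hsv
    refine ⟨fun i => h1 _, ?_⟩
    have := Fin.sum_univ_castSucc sv
    rw [h3] at this
    exact Nat.le_sub_of_add_le (this ▸ h2)
  · intro t ht
    simp only [mem_filter, Fintype.mem_piFinset] at ht ⊢
    obtain ⟨h1, h2⟩ := ht
    refine ⟨fun i => ?_, ?_, ?_⟩
    · refine Fin.lastCases ?_ ?_ i
      · simpa [Fin.snoc_last] using Finset.mem_Icc.2 ⟨hl, hlm⟩
      · intro j; simpa [Fin.snoc_castSucc] using h1 j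
    · rw [snoc_sum]
      omega
    · simp
  · intro sv hsv
    simp only [mem_filter] at hsv
    rw [← hsv.2.2]
    exact Fin.snoc_init_self sv
  · intro t _; simp
  · intro sv hsv
    simp only [mem_filter] at hsv
    rw [← hsv.2.2, Fin.snoc_init_self]

lemma step3 (m l k' : ℕ) (α x : ℝ) :
    ∑ t ∈ (Fintype.piFinset fun _ : Fin k' => Finset.Icc 1 m).filter
        (fun t => ∑ i, t i ≤ m - l),
      Pw α x m (Fin.snoc t l : Fin (k'+1) → ℕ) =
    ∑ s' ∈ Finset.Icc k' (m - l), ∑ t ∈ compositions s' k',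
      Pw α x m (Fin.snoc t l : Fin (k'+1) → ℕ) := by
  rw [← Finset.sum_fiberwise_of_maps_to (g := fun t : Fin k' → ℕ => ∑ i, t i)
    (t := Finset.Icc k' (m - l)) ?_ (fun t => Pw α x m (Fin.snoc t l : Fin (k'+1) → ℕ))]
  · refine Finset.sum_congr rfl fun s' hs' => ?_
    refine Finset.sum_congr ?_ fun _ _ => rfl
    ext t
    simp only [mem_filter, Fintype.mem_piFinset, compositions, Finset.mem_Icc,
      Finset.mem_range] at *
    constructor
    · rintro ⟨⟨h1, h2⟩, h3⟩
      refine ⟨fun i => ?_, fun i => (h1 i).1, h3⟩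
      have : t i ≤ ∑ i, t i := Finset.single_le_sum (fun _ _ => Nat.zero_le _) (mem_univ i)
      omega
    · rintro ⟨h1, h2, h3⟩
      have hle : ∀ i, t i ≤ ∑ i, t i :=
        fun i => Finset.single_le_sum (fun _ _ => Nat.zero_le _) (mem_univ i)
      have hs : s' ≤ m - l := hs'.2
      refine ⟨⟨fun i => ⟨h2 i, ?_⟩, ?_⟩, h3⟩
      · have := hle i; omega
      · omega
  · intro t ht
    simp only [mem_filter, Fintype.mem_piFinset] at ht
    refine Finset.mem_Icc.2 ⟨?_, ht.2⟩
    calc k' = ∑ _i : Fin k', 1 := by simp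
    _ ≤ ∑ i, t i := Finset.sum_le_sum fun i _ => (Finset.mem_Icc.1 (ht.1 i)).1

lemma Pw_snoc (α x : ℝ) (m l k' : ℕ) (t : Fin k' → ℕ) :
    Pw α x m (Fin.snoc t l : Fin (k'+1) → ℕ) =
      (m.factorial : ℝ) /
        ((∏ i, ((t i).factorial : ℝ)) * (l.factorial : ℝ) * ((k'+1).factorial : ℝ) *
          ((m - (∑ i, t i + l)).factorial : ℝ)) *
      risingFac x (m - (∑ i, t i + l)) *
      ((∏ i, risingFac (1 - α) (t i - 1)) * risingFac (1 - α) (l - 1)) := by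
  unfold Pw
  rw [snoc_sum, Fin.prod_univ_castSucc (f := fun i => (((Fin.snoc t l : Fin (k'+1) → ℕ) i).factorial : ℝ)),
    Fin.prod_univ_castSucc (f := fun i => risingFac (1 - α) ((Fin.snoc t l : Fin (k'+1) → ℕ) i - 1))]
  simp only [Fin.snoc_castSucc, Fin.snoc_last]

lemma key (m l k' : ℕ) (hl : 1 ≤ l) (hlm : l ≤ m) (α x : ℝ) :
    ∑ sv ∈ (Fintype.piFinset fun _ : Fin (k'+1) => Finset.Icc 1 m).filter
        (fun sv => ∑ i, sv i ≤ m),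
      (((Finset.univ.filter fun i => sv i = l).card : ℕ) : ℝ) * Pw α x m sv =
    (m.choose l : ℝ) * risingFac (1 - α) (l - 1) * genStirlingNC α (-x) (m - l) k' := by
  rw [step1, step2 m l k' hl hlm, step3]
  unfold genStirlingNC genStirling
  simp only [Finset.mul_sum, Finset.sum_mul]
  refine Finset.sum_congr rfl fun s' hs' => ?_
  obtain ⟨hk's', hs'ml⟩ := Finset.mem_Icc.1 hs'
  refine Finset.sum_congr rfl fun t ht => ?_
  have hsum : ∑ i, t i = s' := by
    simp only [compositions, mem_filter] at ht
    exact ht.2.2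
  have htpos : ∀ i, 0 < t i := by
    simp only [compositions, mem_filter] at ht
    exact ht.2.1
  have hexp : m - (∑ i, t i + l) = m - l - s' := by omega
  rw [Pw_snoc, hexp, neg_neg, Finset.prod_div_distrib,
    Nat.cast_choose ℝ hlm, Nat.cast_choose ℝ hs'ml]
  have h1 : ((∏ i, ((t i).factorial : ℝ))) ≠ 0 :=
    Finset.prod_ne_zero_iff.2 fun i _ => Nat.cast_ne_zero.2 (Nat.factorial_ne_zero _)
  have h2 : ((l.factorial : ℝ)) ≠ 0 := Nat.cast_ne_zero.2 (Nat.factorial_ne_zero _)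
  have h3 : (((k'+1).factorial : ℝ)) ≠ 0 := Nat.cast_ne_zero.2 (Nat.factorial_ne_zero _)
  have h4 : (((m - l - s').factorial : ℝ)) ≠ 0 := Nat.cast_ne_zero.2 (Nat.factorial_ne_zero _)
  have h5 : ((s'.factorial : ℝ)) ≠ 0 := Nat.cast_ne_zero.2 (Nat.factorial_ne_zero _)
  have h6 : ((k'.factorial : ℝ)) ≠ 0 := Nat.cast_ne_zero.2 (Nat.factorial_ne_zero _)
  have h7 : (((m - l).factorial : ℝ)) ≠ 0 := Nat.cast_ne_zero.2 (Nat.factorial_ne_zero _)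
  have hfs : (((k'+1).factorial : ℝ)) = ((k' : ℝ) + 1) * (k'.factorial : ℝ) := by
    rw [Nat.factorial_succ]; push_cast; ring
  rw [hfs]
  field_simp

/-- Bayesian nonparametric estimator of the probability of observing at step
`n+m+1` a species represented `l` times among the new species. -/
theorem bayes_estimator_new_species_size_l (n j m : ℕ) (hn : 1 ≤ n) (hj : 1 ≤ j)
    (hm : 1 ≤ m) (hjn : j ≤ n)
    (nv : Fin j → ℕ) (hnv : ∀ i, 0 < nv i) (hsum : ∑ i, nv i = n)
    (α : ℝ) (hα : α < 1) (V : ℕ → ℕ → ℝ) (hV : V n j ≠ 0)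
    (hV2 : ∀ k ∈ Finset.Icc 1 m, V (n + m) (j + k) ≠ 0)
    (l : ℕ) (hl : 1 ≤ l) (hlm : l ≤ m) :
    ∑ k ∈ Finset.Icc 1 m,
        ∑ sv ∈ (Fintype.piFinset fun _ : Fin k => Finset.Icc 1 m).filter
            (fun sv => ∑ i, sv i ≤ m),
          V (n + m + 1) (j + k) / V (n + m) (j + k) * ((l : ℝ) - α) *
            (((Finset.univ.filter fun i => sv i = l).card : ℕ) : ℝ) *
            condMulti α V n j m k sv =
      ((l : ℝ) - α) * (m.choose l : ℝ) * risingFac (1 - α) (l - 1) *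
        ∑ k ∈ Finset.Icc 1 (m - l + 1),
          V (n + m + 1) (j + k) / V n j *
            genStirlingNC α (-((n : ℝ) - j * α)) (m - l) (k - 1) := by
  have hc : ∀ (k : ℕ) (sv : Fin k → ℕ), condMulti α V n j m k sv =
      V (n + m) (j + k) / V n j * Pw α ((n : ℝ) - j * α) m sv := by
    intro k sv; unfold condMulti Pw; ring
  have hsub : Finset.Icc 1 (m - l + 1) ⊆ Finset.Icc 1 m :=
    Finset.Icc_subset_Icc_right (by omega)
  have hzero : ∀ k ∈ Finset.Icc 1 m, k ∉ Finset.Icc 1 (m - l + 1) →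
      V (n + m + 1) (j + k) / V n j *
        genStirlingNC α (-((n : ℝ) - j * α)) (m - l) (k - 1) = 0 := by
    intro k hk hk'
    simp only [Finset.mem_Icc] at hk hk'
    rw [genStirlingNC, Finset.Icc_eq_empty (by omega), Finset.sum_empty, mul_zero]
  rw [show (∑ k ∈ Finset.Icc 1 (m - l + 1),
        V (n + m + 1) (j + k) / V n j *
          genStirlingNC α (-((n : ℝ) - j * α)) (m - l) (k - 1)) =
      ∑ k ∈ Finset.Icc 1 m,
        V (n + m + 1) (j + k) / V n j *
          genStirlingNC α (-((n : ℝ) - j * α)) (m - l) (k - 1) from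
    Finset.sum_subset hsub hzero, Finset.mul_sum]
  refine Finset.sum_congr rfl fun k hk => ?_
  have hV2k := hV2 k hk
  obtain ⟨hk1, hkm⟩ := Finset.mem_Icc.1 hk
  obtain ⟨k', rfl⟩ : ∃ k', k = k' + 1 := ⟨k - 1, by omega⟩
  calc ∑ sv ∈ (Fintype.piFinset fun _ : Fin (k'+1) => Finset.Icc 1 m).filter
            (fun sv => ∑ i, sv i ≤ m),
          V (n + m + 1) (j + (k'+1)) / V (n + m) (j + (k'+1)) * ((l : ℝ) - α) *
            (((Finset.univ.filter fun i => sv i = l).card : ℕ) : ℝ) *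
            condMulti α V n j m (k'+1) sv
      = ((l : ℝ) - α) * (V (n + m + 1) (j + (k'+1)) / V n j) *
          ∑ sv ∈ (Fintype.piFinset fun _ : Fin (k'+1) => Finset.Icc 1 m).filter
            (fun sv => ∑ i, sv i ≤ m),
            (((Finset.univ.filter fun i => sv i = l).card : ℕ) : ℝ) *
              Pw α ((n : ℝ) - j * α) m sv := by
        rw [Finset.mul_sum]
        refine Finset.sum_congr rfl fun sv _ => ?_
        rw [hc]
        field_simp
    _ = ((l : ℝ) - α) * (m.choose l : ℝ) * risingFac (1 - α) (l - 1) *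
          (V (n + m + 1) (j + (k'+1)) / V n j *
            genStirlingNC α (-((n : ℝ) - j * α)) (m - l) (k' + 1 - 1)) := by
        rw [key m l k' hl hlm α ((n : ℝ) - j * α)]
        simp only [Nat.add_sub_cancel]
        ring
end

section
/- Fix integers n, j, m ≥ 1 with j ≤ n, a composition (n_1,…,n_j) of n into j positive parts, a real α < 1, and real weights V(n,k) with V(n,j) ≠ 0 and V(n+m, j+k) ≠ 0 for all k ∈ {0,…,m}. Let 1 ≤ l ≤ n+m. Then the Bayesian nonparametric estimator of the probability of observing at step n+m+1 a species represented l times among the old species satisfies: ∑ (V(n+m+1,j+k)/V(n+m,j+k))·(l−α)·#{i ∈ {1,…,j} : n_i+m_i = l}·q(m_1,…,m_j; s_1,…,s_k; k) = (l−α)·∑_{i : n_i ≤ l ≤ n_i+m} binom(m, l−n_i)·(n_i−α)_{l−n_i}·∑_{k=0}^{m−l+n_i} (V(n+m+1,j+k)/V(n,j))·S(m−l+n_i, k; α, −(n−jα+α−n_i)), where the left sum ranges over all allocations consisting of nonnegative integers (m_1,…,m_j), an integer k ≥ 0 and positive integers (s_1,…,s_k) with ∑_{i=1}^{j} m_i +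 ∑_{i=1}^{k} s_i = m. -/
/-- The full conditional distribution weight
`q(m_1,…,m_j; s_1,…,s_k; k) = m!/(∏ s_i!·k!·∏ m_i!)·(V(n+m,j+k)/V(n,j))·
∏_i (n_i−α)_{m_i}·∏_i (1−α)_{s_i−1}`. -/
noncomputable def condFull (α : ℝ) (V : ℕ → ℕ → ℝ) (n j m : ℕ) (nv : Fin j → ℕ)
    (k : ℕ) (mv : Fin j → ℕ) (sv : Fin k → ℕ) : ℝ :=
  (Nat.factorial m : ℝ) /
      ((∏ i, (Nat.factorial (sv i) : ℝ)) * (Nat.factorial k : ℝ) *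
        ∏ i, (Nat.factorial (mv i) : ℝ)) *
    (V (n + m) (j + k) / V n j) *
    (∏ i, risingFac ((nv i : ℝ) - α) (mv i)) *
    ∏ i, risingFac (1 - α) (sv i - 1)


open Finset Fintype in
lemma risingFac_succ (x : ℝ) (n : ℕ) : risingFac x (n+1) = risingFac x n * (x + n) := by
  simp [risingFac, Finset.prod_range_succ]

@[simp] lemma risingFac_zero (x : ℝ) : risingFac x 0 = 1 := by simp [risingFac]

lemma vandermonde2 (a b : ℝ) (q : ℕ) :
    risingFac (a + b) q =
      ∑ v ∈ Finset.range (q+1), (q.choose v : ℝ) * risingFac a v * risingFac b (q - v) := by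
  induction q with
  | zero => simp
  | succ q ih =>
    rw [risingFac_succ, ih, Finset.sum_mul]
    rw [Finset.sum_range_succ' _ (q+1)]
    have h1 : ∀ v ∈ Finset.range (q+1),
        ((q+1).choose (v+1) : ℝ) * risingFac a (v+1) * risingFac b (q+1-(v+1)) =
        (q.choose v : ℝ) * risingFac a (v+1) * risingFac b (q-v)
          + (q.choose (v+1) : ℝ) * risingFac a (v+1) * risingFac b (q-v) := by
      intro v _
      have hq : q+1-(v+1) = q - v := by omega
      rw [hq, Nat.choose_succ_succ]
      push_cast
      ring
    rw [Finset.sum_congr rfl h1, Finset.sum_add_distrib]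
    have h2 : ∀ v ∈ Finset.range (q+1),
        (q.choose v : ℝ) * risingFac a v * risingFac b (q - v) * (a+b+q)
        = (q.choose v : ℝ) * risingFac a (v+1) * risingFac b (q-v)
          + (q.choose v : ℝ) * risingFac a v * risingFac b (q-v+1) := by
      intro v hv
      simp only [Finset.mem_range] at hv
      rw [risingFac_succ, risingFac_succ]
      have hc : ((q - v : ℕ) : ℝ) = (q : ℝ) - v := by
        have : v ≤ q := by omega
        push_cast [this]; ring
      rw [hc]
      ring
    rw [Finset.sum_congr rfl h2, Finset.sum_add_distrib, add_assoc]
    congr 1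
    rw [Finset.sum_range_succ' (fun v => (q.choose v : ℝ) * risingFac a v * risingFac b (q-v+1)) q]
    rw [Finset.sum_range_succ (fun v => (q.choose (v+1):ℝ) * risingFac a (v+1) * risingFac b (q-v)) q]
    simp only [Nat.choose_succ_self, Nat.cast_zero, Nat.choose_zero_right, Nat.cast_one,
      risingFac_zero, zero_mul, mul_one, one_mul, add_zero, Nat.sub_zero, Nat.sub_self]
    have h3 : ∀ v ∈ Finset.range q,
        (q.choose (v+1):ℝ) * risingFac a (v+1) * risingFac b (q-(v+1)+1)
        = (q.choose (v+1):ℝ) * risingFac a (v+1) * risingFac b (q-v) := by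
      intro v hv
      simp only [Finset.mem_range] at hv
      have : q-(v+1)+1 = q - v := by omega
      rw [this]
    rw [Finset.sum_congr rfl h3]

lemma risingFac_of_zero {q : ℕ} (hq : 0 < q) : risingFac 0 q = 0 := by
  apply Finset.prod_eq_zero (Finset.mem_range.mpr hq)
  simp

open Finset in
lemma vdm_multi {ι : Type*} [Fintype ι] [DecidableEq ι] (M : ℕ) (a : ι → ℝ) (s : Finset ι) :
    ∀ q ≤ M,
    ∑ f ∈ (Fintype.piFinset fun _ : ι => Finset.range (M+1)).filter
        (fun f => (∀ t ∉ s, f t = 0) ∧ ∑ t ∈ s, f t = q),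
      (q.factorial : ℝ) / (∏ t ∈ s, ((f t).factorial : ℝ)) * ∏ t ∈ s, risingFac (a t) (f t)
    = risingFac (∑ t ∈ s, a t) q := by
  induction s using Finset.induction_on with
  | empty =>
    intro q hq
    rcases Nat.eq_zero_or_pos q with h | h
    · subst h
      have hset : (Fintype.piFinset fun _ : ι => Finset.range (M+1)).filter
          (fun f => (∀ t ∉ (∅ : Finset ι), f t = 0) ∧ ∑ t ∈ (∅ : Finset ι), f t = 0)
          = {fun _ => 0} := by
        ext f
        simp only [Finset.mem_filter, Fintype.mem_piFinset, Finset.mem_range,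
          Finset.mem_singleton, Finset.notMem_empty, funext_iff, Finset.sum_empty]
        constructor
        · rintro ⟨-, h, -⟩ t; exact h t (by simp)
        · intro h
          exact ⟨fun t => by rw [h t]; omega, fun t _ => h t, trivial⟩
      rw [hset]
      simp
    · have hset : (Fintype.piFinset fun _ : ι => Finset.range (M+1)).filter
          (fun f => (∀ t ∉ (∅ : Finset ι), f t = 0) ∧ ∑ t ∈ (∅ : Finset ι), f t = q)
          = ∅ := by
        ext f
        simp only [Finset.mem_filter, Finset.notMem_empty, iff_false, not_and]
        intro _ _
        simp only [Finset.sum_empty]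
        omega
      rw [hset]
      simp [risingFac_of_zero h]
  | insert _ _ ht0 ih =>
    rename_i t0 s
    intro q hq
    rw [Finset.sum_insert ht0, vandermonde2]
    have step : ∀ v ∈ Finset.range (q+1),
        (q.choose v : ℝ) * risingFac (a t0) v * risingFac (∑ t ∈ s, a t) (q - v)
        = ∑ g ∈ (Fintype.piFinset fun _ : ι => Finset.range (M+1)).filter
            (fun g => (∀ t ∉ s, g t = 0) ∧ ∑ t ∈ s, g t = q - v),
            (q.choose v : ℝ) * risingFac (a t0) v *
              (((q-v).factorial : ℝ) / (∏ t ∈ s, ((g t).factorial : ℝ)) *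
                ∏ t ∈ s, risingFac (a t) (g t)) := by
      intro v _
      rw [← ih (q - v) (le_trans (Nat.sub_le _ _) hq), Finset.mul_sum]
    rw [Finset.sum_congr rfl step, Finset.sum_sigma']
    apply Finset.sum_nbij' (i := fun f => (⟨f t0, Function.update f t0 0⟩ :
        (_ : ℕ) × (ι → ℕ))) (j := fun p => Function.update p.2 t0 p.1)
    · -- hi
      intro f hf
      simp only [Finset.mem_filter, Fintype.mem_piFinset, Finset.mem_range] at hf
      obtain ⟨hpi, hsupp, hsumf⟩ := hf
      rw [Finset.sum_insert ht0] at hsumf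
      simp only [Finset.mem_sigma, Finset.mem_range, Finset.mem_filter, Fintype.mem_piFinset]
      refine ⟨by omega, fun t => ?_, fun t hts => ?_, ?_⟩
      · by_cases h : t = t0 <;> simp [h, Function.update, hpi t]
      · by_cases h : t = t0
        · subst h; simp
        · rw [Function.update_of_ne h]
          exact hsupp t (by simp [hts, h])
      · have h5 : ∀ t ∈ s, Function.update f t0 0 t = f t := by
          intro t hts; apply Function.update_of_ne; rintro rfl; exact ht0 hts
        rw [Finset.sum_congr rfl h5]
        show ∑ x ∈ s, f x = q - f t0
        omega
    · -- hj
      intro p hp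
      simp only [Finset.mem_sigma, Finset.mem_range, Finset.mem_filter,
        Fintype.mem_piFinset] at hp
      obtain ⟨hv, hpi, hsupp, hsumg⟩ := hp
      simp only [Finset.mem_filter, Fintype.mem_piFinset, Finset.mem_range]
      refine ⟨fun t => ?_, fun t hts => ?_, ?_⟩
      · by_cases h : t = t0
        · simp [h, Function.update]; omega
        · simp [Function.update, h, hpi t]
      · simp only [Finset.mem_insert, not_or] at hts
        rw [Function.update_of_ne hts.1]
        exact hsupp t hts.2
      · rw [Finset.sum_insert ht0, Function.update_self]
        have : ∀ t ∈ s, Function.update p.2 t0 p.1 t = p.2 t := by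
          intro t hts; apply Function.update_of_ne; rintro rfl; exact ht0 hts
        rw [Finset.sum_congr rfl this]
        show p.1 + ∑ x ∈ s, p.2 x = q
        have : ∑ x ∈ s, p.2 x = q - p.1 := hsumg
        omega
    · -- left inverse
      intro f hf
      rw [Function.update_idem, Function.update_eq_self]
    · -- right inverse
      intro p hp
      simp only [Finset.mem_sigma, Finset.mem_range, Finset.mem_filter,
        Fintype.mem_piFinset] at hp
      obtain ⟨hv, hpi, hsupp, hsumg⟩ := hp
      have h0 : p.2 t0 = 0 := hsupp t0 ht0
      refine Sigma.ext (by simp) (heq_of_eq ?_)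
      simp only
      rw [Function.update_idem, ← h0, Function.update_eq_self]
    · -- values
      intro f hf
      simp only [Finset.mem_filter, Fintype.mem_piFinset, Finset.mem_range] at hf
      obtain ⟨hpi, hsupp, hsumf⟩ := hf
      rw [Finset.sum_insert ht0] at hsumf
      have hupd : ∀ t ∈ s, Function.update f t0 0 t = f t := by
        intro t hts; apply Function.update_of_ne; rintro rfl; exact ht0 hts
      have h1 : ∏ t ∈ s, ((Function.update f t0 0 t).factorial : ℝ)
          = ∏ t ∈ s, ((f t).factorial : ℝ) :=
        Finset.prod_congr rfl (fun t hts => by rw [hupd t hts])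
      have h2 : ∏ t ∈ s, risingFac (a t) (Function.update f t0 0 t)
          = ∏ t ∈ s, risingFac (a t) (f t) :=
        Finset.prod_congr rfl (fun t hts => by rw [hupd t hts])
      rw [h1, h2, Finset.prod_insert ht0, Finset.prod_insert ht0]
      have hvq : f t0 ≤ q := by omega
      have hfac : (q.factorial : ℝ)
          = (q.choose (f t0)) * (f t0).factorial * (q - f t0).factorial := by
        exact_mod_cast (Nat.choose_mul_factorial_mul_factorial hvq).symm
      have hP : (∏ t ∈ s, ((f t).factorial : ℝ)) ≠ 0 :=
        Finset.prod_ne_zero_iff.mpr (fun t _ => Nat.cast_ne_zero.mpr (Nat.factorial_ne_zero _))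
      have hv0 : ((f t0).factorial : ℝ) ≠ 0 := Nat.cast_ne_zero.mpr (Nat.factorial_ne_zero _)
      rw [hfac]
      field_simp

open Finset Fintype in
lemma comp_sum (α : ℝ) (M u k : ℕ) (hu : u ≤ M) :
    ∑ sv ∈ (piFinset fun _ : Fin k => Finset.Icc 1 M).filter (fun f => ∑ i, f i = u),
      ((u.factorial : ℝ) / ((∏ i, ((sv i).factorial : ℝ)) * (k.factorial : ℝ))) *
        ∏ i, risingFac (1-α) (sv i - 1)
    = genStirling α u k := by
  have hset : (piFinset fun _ : Fin k => Finset.Icc 1 M).filter (fun f => ∑ i, f i = u)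
      = compositions u k := by
    ext f
    simp only [compositions, mem_filter, mem_piFinset, Finset.mem_Icc, Finset.mem_range]
    constructor
    · rintro ⟨h1, h2⟩
      refine ⟨fun i => ?_, fun i => (h1 i).1, h2⟩
      have : f i ≤ ∑ t, f t := Finset.single_le_sum (fun t _ => Nat.zero_le _) (mem_univ i)
      omega
    · rintro ⟨h1, h2, h3⟩
      refine ⟨fun i => ⟨h2 i, ?_⟩, h3⟩
      have : f i ≤ ∑ t, f t := Finset.single_le_sum (fun t _ => Nat.zero_le _) (mem_univ i)
      omega
  rw [hset, genStirling, Finset.mul_sum]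
  apply Finset.sum_congr rfl
  intro f hf
  rw [Finset.prod_div_distrib]
  have hP : (∏ i, ((f i).factorial : ℝ)) ≠ 0 :=
    Finset.prod_ne_zero_iff.mpr (fun t _ => Nat.cast_ne_zero.mpr (Nat.factorial_ne_zero _))
  have hk : (k.factorial : ℝ) ≠ 0 := Nat.cast_ne_zero.mpr (Nat.factorial_ne_zero _)
  field_simp

lemma genStirlingNC_zero (α γ : ℝ) {r k : ℕ} (h : r < k) : genStirlingNC α γ r k = 0 := by
  rw [genStirlingNC, Finset.Icc_eq_empty (by omega), Finset.sum_empty]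

open Finset Fintype in
lemma core {ι : Type*} [Fintype ι] [DecidableEq ι] (α : ℝ) (M : ℕ) (a : ι → ℝ) (s : Finset ι)
    (k : ℕ) (r : ℕ) (hrM : r ≤ M) :
    ∑ p ∈ ((piFinset fun _ : ι => Finset.range (M+1)) ×ˢ
          (piFinset fun _ : Fin k => Finset.Icc 1 M)).filter
        (fun p => (∀ t ∉ s, p.1 t = 0) ∧ ∑ t ∈ s, p.1 t + ∑ i, p.2 i = r),
      (r.factorial : ℝ) /
          ((∏ i, ((p.2 i).factorial : ℝ)) * (k.factorial : ℝ) * ∏ t ∈ s, ((p.1 t).factorial : ℝ)) *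
        (∏ t ∈ s, risingFac (a t) (p.1 t)) * ∏ i, risingFac (1-α) (p.2 i - 1)
    = genStirlingNC α (-(∑ t ∈ s, a t)) r k := by
  rw [genStirlingNC, neg_neg]
  -- RHS: ∑ u ∈ Icc k r, C(r,u) * genStirling α u k * risingFac A (r-u)
  have hRHS : ∀ u ∈ Finset.Icc k r,
      (r.choose u : ℝ) * genStirling α u k * risingFac (∑ t ∈ s, a t) (r - u)
      = ∑ q ∈ ((piFinset fun _ : ι => Finset.range (M+1)).filter
            (fun f => (∀ t ∉ s, f t = 0) ∧ ∑ t ∈ s, f t = r - u)) ×ˢ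
          ((piFinset fun _ : Fin k => Finset.Icc 1 M).filter (fun f => ∑ i, f i = u)),
          (r.choose u : ℝ) *
            (((r-u).factorial : ℝ) / (∏ t ∈ s, ((q.1 t).factorial : ℝ)) *
              ∏ t ∈ s, risingFac (a t) (q.1 t)) *
            (((u.factorial : ℝ) / ((∏ i, ((q.2 i).factorial : ℝ)) * (k.factorial : ℝ))) *
              ∏ i, risingFac (1-α) (q.2 i - 1)) := by
    intro u hu
    simp only [Finset.mem_Icc] at hu
    rw [← vdm_multi M a s (r - u) (le_trans (Nat.sub_le _ _) hrM),
      ← comp_sum α M u k (le_trans hu.2 hrM), Finset.sum_product_right]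
    simp only [Finset.mul_sum, Finset.sum_mul]
    rw [Finset.sum_comm]
    apply Finset.sum_congr rfl
    intro f _
    apply Finset.sum_congr rfl
    intro g _
    ring
  rw [Finset.sum_congr rfl hRHS, Finset.sum_sigma']
  symm
  apply Finset.sum_nbij' (i := fun q => q.2) (j := fun p => ⟨∑ i, p.2 i, p⟩)
  · -- hi : membership of q.2 in the filtered pair set
    rintro ⟨u, mv, sv⟩ hq
    simp only [Finset.mem_sigma, Finset.mem_Icc, Finset.mem_product, Finset.mem_filter] at hq
    obtain ⟨⟨hku, hur⟩, ⟨hmv1, hmv2, hmv3⟩, hsv1, hsv2⟩ := hq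
    simp only [Finset.mem_filter, Finset.mem_product]
    exact ⟨⟨hmv1, hsv1⟩, hmv2, by omega⟩
  · -- hj
    rintro ⟨mv, sv⟩ hp
    simp only [Finset.mem_filter, Finset.mem_product] at hp
    obtain ⟨⟨hmv1, hsv1⟩, hsupp, hsum⟩ := hp
    have hsvge : ∀ i, 1 ≤ sv i := by
      intro i
      have := (mem_piFinset.mp hsv1) i
      exact (Finset.mem_Icc.mp this).1
    have hk : k ≤ ∑ i, sv i := by
      calc k = ∑ _i : Fin k, 1 := by simp
      _ ≤ ∑ i, sv i := Finset.sum_le_sum (fun i _ => hsvge i)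
    simp only [Finset.mem_sigma, Finset.mem_Icc, Finset.mem_product, Finset.mem_filter]
    exact ⟨⟨hk, by omega⟩, ⟨hmv1, hsupp, by omega⟩, hsv1, trivial⟩
  · rintro ⟨u, mv, sv⟩ hq
    simp only [Finset.mem_sigma, Finset.mem_Icc, Finset.mem_product, Finset.mem_filter] at hq
    obtain ⟨⟨hku, hur⟩, ⟨hmv1, hmv2, hmv3⟩, hsv1, hsv2⟩ := hq
    exact Sigma.ext (by simpa using hsv2) (by rfl)
  · rintro ⟨mv, sv⟩ _
    rfl
  · -- values
    rintro ⟨u, mv, sv⟩ hq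
    simp only [Finset.mem_sigma, Finset.mem_Icc, Finset.mem_product, Finset.mem_filter] at hq
    obtain ⟨⟨hku, hur⟩, ⟨hmv1, hmv2, hmv3⟩, hsv1, hsv2⟩ := hq
    simp only
    have hfac : (r.factorial : ℝ) = (r.choose u) * u.factorial * (r - u).factorial := by
      exact_mod_cast (Nat.choose_mul_factorial_mul_factorial hur).symm
    have hP1 : (∏ t ∈ s, ((mv t).factorial : ℝ)) ≠ 0 :=
      Finset.prod_ne_zero_iff.mpr (fun t _ => Nat.cast_ne_zero.mpr (Nat.factorial_ne_zero _))
    have hP2 : (∏ i, ((sv i).factorial : ℝ)) ≠ 0 :=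
      Finset.prod_ne_zero_iff.mpr (fun t _ => Nat.cast_ne_zero.mpr (Nat.factorial_ne_zero _))
    have hk0 : (k.factorial : ℝ) ≠ 0 := Nat.cast_ne_zero.mpr (Nat.factorial_ne_zero _)
    rw [hfac]
    field_simp

open Finset Fintype in
/-- Bayesian nonparametric estimator -/
theorem bayes_estimator_old_species_size_l (n j m : ℕ) (hn : 1 ≤ n) (hj : 1 ≤ j)
    (hm : 1 ≤ m) (hjn : j ≤ n)
    (nv : Fin j → ℕ) (hnv : ∀ i, 0 < nv i) (hsum : ∑ i, nv i = n)
    (α : ℝ) (hα : α < 1) (V : ℕ → ℕ → ℝ) (hV : V n j ≠ 0)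
    (hV2 : ∀ k ∈ Finset.range (m + 1), V (n + m) (j + k) ≠ 0)
    (l : ℕ) (hl : 1 ≤ l) (hln : l ≤ n + m) :
    ∑ k ∈ Finset.range (m + 1),
        ∑ p ∈ ((Fintype.piFinset fun _ : Fin j => Finset.range (m + 1)) ×ˢ
              (Fintype.piFinset fun _ : Fin k => Finset.Icc 1 m)).filter
            (fun p => ∑ i, p.1 i + ∑ i, p.2 i = m),
          V (n + m + 1) (j + k) / V (n + m) (j + k) * ((l : ℝ) - α) *
            (((Finset.univ.filter fun i => nv i + p.1 i = l).card : ℕ) : ℝ) *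
            condFull α V n j m nv k p.1 p.2 =
      ((l : ℝ) - α) *
        ∑ i ∈ Finset.univ.filter (fun i => nv i ≤ l ∧ l ≤ nv i + m),
          (m.choose (l - nv i) : ℝ) * risingFac ((nv i : ℝ) - α) (l - nv i) *
            ∑ k ∈ Finset.range (m + nv i - l + 1),
              (V (n + m + 1) (j + k) / V n j) *
                genStirlingNC α (-((n : ℝ) - j * α + α - nv i)) (m + nv i - l) k := by
  classical
  -- Step 1: expand the counting factor and cancel the V-ratio
  have expand : ∀ k ∈ Finset.range (m+1),
      ∀ p ∈ ((Fintype.piFinset fun _ : Fin j => Finset.range (m + 1)) ×ˢ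
              (Fintype.piFinset fun _ : Fin k => Finset.Icc 1 m)).filter
            (fun p => ∑ i, p.1 i + ∑ i, p.2 i = m),
      V (n + m + 1) (j + k) / V (n + m) (j + k) * ((l : ℝ) - α) *
          (((Finset.univ.filter fun i => nv i + p.1 i = l).card : ℕ) : ℝ) *
          condFull α V n j m nv k p.1 p.2
      = ∑ i : Fin j, (if nv i + p.1 i = l then
          ((l : ℝ) - α) * (V (n + m + 1) (j + k) / V n j) *
            ((Nat.factorial m : ℝ) /
              ((∏ t, (Nat.factorial (p.2 t) : ℝ)) * (Nat.factorial k : ℝ) *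
                ∏ t, (Nat.factorial (p.1 t) : ℝ)) *
              (∏ t, risingFac ((nv t : ℝ) - α) (p.1 t)) *
              ∏ t, risingFac (1 - α) (p.2 t - 1)) else 0) := by
    intro k hk p _
    have hVc : V (n+m+1) (j+k) / V (n+m) (j+k) * (V (n+m) (j+k) / V n j)
        = V (n+m+1) (j+k) / V n j := by
      rw [div_mul_div_comm, mul_comm (V (n+m+1) (j+k)) _,
        mul_div_mul_left _ _ (hV2 k hk)]
    have hcard : (((Finset.univ.filter fun i => nv i + p.1 i = l).card : ℕ) : ℝ)
        = ∑ i : Fin j, (if nv i + p.1 i = l then (1:ℝ) else 0) := by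
      rw [Finset.card_filter]
      push_cast
      rfl
    rw [hcard, mul_comm (V (n+m+1) (j+k) / V (n+m) (j+k) * ((l:ℝ) - α)) _, mul_assoc,
      Finset.sum_mul]
    apply Finset.sum_congr rfl
    intro i _
    by_cases h : nv i + p.1 i = l
    · simp only [if_pos h, one_mul]
      rw [condFull, ← hVc]
      ring
    · simp only [if_neg h, zero_mul]
  rw [Finset.sum_congr rfl (fun k hk => Finset.sum_congr rfl (expand k hk))]
  rw [Finset.sum_congr rfl (fun k _ => Finset.sum_comm), Finset.sum_comm]
  rw [Finset.mul_sum, Finset.sum_filter]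
  apply Finset.sum_congr rfl
  intro i _
  by_cases hcond : nv i ≤ l ∧ l ≤ nv i + m
  · rw [if_pos hcond]
    obtain ⟨h1, h2⟩ := hcond
    have hdm : l - nv i ≤ m := by omega
    have hnv_le : nv i ≤ n := by
      rw [← hsum]
      exact Finset.single_le_sum (fun t _ => Nat.zero_le _) (Finset.mem_univ i)
    have hgamma : -(∑ t ∈ Finset.univ.erase i, ((nv t : ℝ) - α))
        = -((n:ℝ) - j*α + α - nv i) := by
      have hse : (∑ t ∈ Finset.univ.erase i, nv t) + nv i = ∑ t, nv t :=
        Finset.sum_erase_add _ _ (Finset.mem_univ i)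
      have hse2 : ∑ t ∈ Finset.univ.erase i, nv t = n - nv i := by omega
      have hcast : ∑ t ∈ Finset.univ.erase i, ((nv t:ℝ)) = (n:ℝ) - nv i := by
        rw [← Nat.cast_sum, hse2]
        push_cast [hnv_le]
        ring
      rw [Finset.sum_sub_distrib, hcast, Finset.sum_const,
        Finset.card_erase_of_mem (Finset.mem_univ i), Finset.card_univ, Fintype.card_fin,
        nsmul_eq_mul]
      have hj1 : ((j - 1 : ℕ) : ℝ) = (j:ℝ) - 1 := by push_cast [hj]; ring
      rw [hj1]
      ring
    have hinner : ∀ k ∈ Finset.range (m+1),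
        ∑ p ∈ ((Fintype.piFinset fun _ : Fin j => Finset.range (m + 1)) ×ˢ
              (Fintype.piFinset fun _ : Fin k => Finset.Icc 1 m)).filter
            (fun p => ∑ t, p.1 t + ∑ t, p.2 t = m),
          (if nv i + p.1 i = l then
            ((l : ℝ) - α) * (V (n + m + 1) (j + k) / V n j) *
              ((Nat.factorial m : ℝ) /
                ((∏ t, (Nat.factorial (p.2 t) : ℝ)) * (Nat.factorial k : ℝ) *
                  ∏ t, (Nat.factorial (p.1 t) : ℝ)) *
                (∏ t, risingFac ((nv t : ℝ) - α) (p.1 t)) *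
                ∏ t, risingFac (1 - α) (p.2 t - 1)) else 0)
        = ((l : ℝ) - α) * ((m.choose (l - nv i) : ℝ) * risingFac ((nv i:ℝ) - α) (l - nv i)) *
            ((V (n + m + 1) (j + k) / V n j) *
              genStirlingNC α (-((n : ℝ) - j * α + α - nv i)) (m - (l - nv i)) k) := by
      intro k hk
      rw [Finset.sum_congr rfl (fun p _ => if_congr (by omega : (nv i + p.1 i = l) ↔ (p.1 i = l - nv i)) rfl rfl),
        ← Finset.sum_filter, Finset.filter_filter, ← hgamma,
        ← core α m (fun t => (nv t : ℝ) - α) (Finset.univ.erase i) k (m - (l - nv i)) (by omega),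
        Finset.mul_sum, Finset.mul_sum]
      have hne : ∀ t : Fin j, t ∉ Finset.univ.erase i ↔ t = i := by
        intro t; simp [Finset.mem_erase]
      apply Finset.sum_nbij' (i := fun p => (Function.update p.1 i 0, p.2))
        (j := fun q => (Function.update q.1 i (l - nv i), q.2))
      · rintro ⟨mv, sv⟩ hp
        simp only [Finset.mem_filter, Finset.mem_product, mem_piFinset, Finset.mem_range] at hp ⊢
        obtain ⟨⟨hmv, hsv⟩, hsm, hd⟩ := hp
        refine ⟨⟨fun t => ?_, hsv⟩, fun t ht => ?_, ?_⟩
        · by_cases h : t = i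
          · subst h; simp
          · rw [Function.update_of_ne h]; exact hmv t
        · rw [(hne t).mp ht, Function.update_self]
        · have hupd : ∀ t ∈ Finset.univ.erase i, Function.update mv i 0 t = mv t := by
            intro t ht
            exact Function.update_of_ne (Finset.mem_erase.mp ht).1 _ _
          have htot : ∑ x : Fin j, mv x = (∑ t ∈ Finset.univ.erase i, mv t) + mv i :=
            (Finset.sum_erase_add _ _ (Finset.mem_univ i)).symm
          rw [Finset.sum_congr rfl hupd]
          show (∑ t ∈ Finset.univ.erase i, mv t) + ∑ x : Fin k, sv x = m - (l - nv i)
          omega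
      · rintro ⟨mv, sv⟩ hq
        simp only [Finset.mem_filter, Finset.mem_product, mem_piFinset, Finset.mem_range] at hq ⊢
        obtain ⟨⟨hmv, hsv⟩, hsupp, hsm⟩ := hq
        have hupd : ∀ t ∈ Finset.univ.erase i, Function.update mv i (l - nv i) t = mv t := by
          intro t ht
          exact Function.update_of_ne (Finset.mem_erase.mp ht).1 _ _
        refine ⟨⟨fun t => ?_, hsv⟩, ?_, Function.update_self _ _ _⟩
        · by_cases h : t = i
          · subst h; rw [Function.update_self]; omega
          · rw [Function.update_of_ne h]; exact hmv t
        · have htot : ∑ x : Fin j, Function.update mv i (l - nv i) x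
              = (∑ t ∈ Finset.univ.erase i, mv t) + (l - nv i) := by
            rw [← Finset.sum_erase_add Finset.univ _ (Finset.mem_univ i),
              Function.update_self, Finset.sum_congr rfl hupd]
          rw [htot]
          omega
      · rintro ⟨mv, sv⟩ hp
        simp only [Finset.mem_filter] at hp
        have hd : mv i = l - nv i := hp.2.2
        simp only [Prod.mk.injEq]
        constructor
        · rw [Function.update_idem, ← hd, Function.update_eq_self]
        · trivial
      · rintro ⟨mv, sv⟩ hq
        simp only [Finset.mem_filter] at hq
        have h0 : mv i = 0 := hq.2.1 i ((hne i).mpr rfl)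
        simp only [Prod.mk.injEq]
        constructor
        · rw [Function.update_idem, ← h0, Function.update_eq_self]
        · trivial
      · rintro ⟨mv, sv⟩ hp
        simp only [Finset.mem_filter, Finset.mem_product, mem_piFinset, Finset.mem_range] at hp
        obtain ⟨⟨hmv, hsv⟩, hsm, hd⟩ := hp
        simp only at hd hsm ⊢
        have hupd : ∀ t ∈ Finset.univ.erase i, Function.update mv i 0 t = mv t := by
          intro t ht
          exact Function.update_of_ne (Finset.mem_erase.mp ht).1 _ _
        have e1 : ∏ t ∈ Finset.univ.erase i, ((Function.update mv i 0 t).factorial : ℝ)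
            = ∏ t ∈ Finset.univ.erase i, ((mv t).factorial : ℝ) :=
          Finset.prod_congr rfl (fun t ht => by rw [hupd t ht])
        have e2 : ∏ t ∈ Finset.univ.erase i, risingFac ((nv t : ℝ) - α) (Function.update mv i 0 t)
            = ∏ t ∈ Finset.univ.erase i, risingFac ((nv t : ℝ) - α) (mv t) :=
          Finset.prod_congr rfl (fun t ht => by rw [hupd t ht])
        rw [e1, e2]
        have d1 : ∏ t, ((mv t).factorial : ℝ)
            = ((mv i).factorial : ℝ) * ∏ t ∈ Finset.univ.erase i, ((mv t).factorial : ℝ) :=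
          (Finset.mul_prod_erase Finset.univ _ (Finset.mem_univ i)).symm
        have d2 : ∏ t, risingFac ((nv t : ℝ) - α) (mv t)
            = risingFac ((nv i : ℝ) - α) (mv i) *
              ∏ t ∈ Finset.univ.erase i, risingFac ((nv t : ℝ) - α) (mv t) :=
          (Finset.mul_prod_erase Finset.univ _ (Finset.mem_univ i)).symm
        rw [d1, d2, hd]
        have hfac : (m.factorial : ℝ)
            = (m.choose (l - nv i)) * (l - nv i).factorial * (m - (l - nv i)).factorial := by
          exact_mod_cast (Nat.choose_mul_factorial_mul_factorial hdm).symm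
        have hP1 : (∏ t ∈ Finset.univ.erase i, ((mv t).factorial : ℝ)) ≠ 0 :=
          Finset.prod_ne_zero_iff.mpr (fun t _ => Nat.cast_ne_zero.mpr (Nat.factorial_ne_zero _))
        have hP2 : (∏ t, ((sv t).factorial : ℝ)) ≠ 0 :=
          Finset.prod_ne_zero_iff.mpr (fun t _ => Nat.cast_ne_zero.mpr (Nat.factorial_ne_zero _))
        have hk0 : (k.factorial : ℝ) ≠ 0 := Nat.cast_ne_zero.mpr (Nat.factorial_ne_zero _)
        have hd0 : ((l - nv i).factorial : ℝ) ≠ 0 := Nat.cast_ne_zero.mpr (Nat.factorial_ne_zero _)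
        rw [hfac]
        field_simp
    rw [Finset.sum_congr rfl hinner]
    have htrunc : ∑ k ∈ Finset.range (m+1),
        ((l : ℝ) - α) * ((m.choose (l - nv i) : ℝ) * risingFac ((nv i:ℝ) - α) (l - nv i)) *
          ((V (n + m + 1) (j + k) / V n j) *
            genStirlingNC α (-((n : ℝ) - j * α + α - nv i)) (m - (l - nv i)) k)
        = ∑ k ∈ Finset.range (m - (l - nv i) + 1),
        ((l : ℝ) - α) * ((m.choose (l - nv i) : ℝ) * risingFac ((nv i:ℝ) - α) (l - nv i)) *
          ((V (n + m + 1) (j + k) / V n j) *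
            genStirlingNC α (-((n : ℝ) - j * α + α - nv i)) (m - (l - nv i)) k) := by
      symm
      apply Finset.sum_subset (Finset.range_subset_range.mpr (by omega))
      intro k hk1 hk2
      simp only [Finset.mem_range] at hk1 hk2
      rw [genStirlingNC_zero α _ (by omega)]
      ring
    rw [htrunc]
    have hr : m + nv i - l = m - (l - nv i) := by omega
    rw [hr, ← Finset.mul_sum]
    ring
  · rw [if_neg hcond]
    apply Finset.sum_eq_zero
    intro k hk
    apply Finset.sum_eq_zero
    intro p hp
    simp only [Finset.mem_filter, Finset.mem_product, mem_piFinset, Finset.mem_range] at hp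
    rw [if_neg]
    intro h
    have := hp.1.1 i
    omega
end
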